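/- Let C be a locally finite, Krull-Schmidt, K-linear extriangulated category (K a field) with dim_K Hom_C(X,Y) < ∞ and dim_K E(X,Y) < ∞ for all X,Y ∈ C. If X ∈ Ind(C) is a non-projective object, then S(X) has a minimal element with respect to the relation >, i.e. an element s ∈ S(X) such that t > s for every t ∈ S(X). Dually, if X ∈ Ind(C) is a non-injective object, then S'(X) has a minimal element. -/

import Mathlib

open CategoryTheory CategoryTheory.Limits Opposite ZeroObject

attribute [local instance] CategoryTheory.Limits.hasBinaryBiproducts_of_finite_biproducts

universe w v u

noncomputable section

/-- An object of a preadditive category with finite biproducts is *indecomposable* if it is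
nonzero and admits no nontrivial direct sum decomposition. -/
def Indec {C : Type u} [Category.{v} C] [Preadditive C] [HasFiniteBiproducts C] (X : C) : Prop :=
  ¬ IsZero X ∧ ∀ (Y Z : C), Nonempty (X ≅ Y ⊞ Z) → IsZero Y ∨ IsZero Z

/-- A preadditive category is *Krull-Schmidt* if every object is (isomorphic to) a finite
biproduct of objects having local endomorphism rings. -/
def IsKrullSchmidt (C : Type u) [Category.{v} C] [Preadditive C] [HasFiniteBiproducts C] : Prop :=
  ∀ X : C, ∃ (n : ℕ) (f : Fin n → C),
    (∀ i, IsLocalRing (CategoryTheory.End (f i))) ∧ Nonempty (X ≅ ⨁ f)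

/-- `C` is *locally finite*: for every indecomposable `A` there are, up to isomorphism, only
finitely many indecomposables `B` with `Hom(A, B) ≠ 0`, and only finitely many indecomposables
`B` with `Hom(B, A) ≠ 0`. -/
def LocFinite (C : Type u) [Category.{v} C] [Preadditive C] [HasFiniteBiproducts C] : Prop :=
  ∀ A : C, Indec A →
    (∃ (n : ℕ) (ind : Fin n → C), ∀ B : C, Indec B → (∃ φ : A ⟶ B, φ ≠ 0) →
        ∃ i, Nonempty (B ≅ ind i)) ∧
    (∃ (n : ℕ) (ind : Fin n → C), ∀ B : C, Indec B → (∃ φ : B ⟶ A, φ ≠ 0) →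
        ∃ i, Nonempty (B ≅ ind i))

section ExtCatDef

variable (K : Type w) [Field K]
variable (C : Type u) [Category.{v} C] [Preadditive C] [Linear K C] [HasFiniteBiproducts C]

/-- An extriangulated structure (in the sense of Nakaoka–Palu) on the `K`-linear category `C`,
with `K`-linear extension groups: a biadditive functor `E : Cᵒᵖ × C → Ab` (here landing in
`K`-modules, recording the `K`-linear structure on the extension groups) together with an
additive realization `real` of extensions by conflations, satisfying (ET1)–(ET4) and their
duals. -/
structure ExtCat where
  /-- the biadditive functor `E : Cᵒᵖ × C → Ab`. -/
  E : Cᵒᵖ ⥤ C ⥤ ModuleCat.{v} K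
  additive₁ : E.Additive
  additive₂ : ∀ c : Cᵒᵖ, (E.obj c).Additive
  /-- `real x y δ` says that the sequence `x, y` realizes the extension `δ`, i.e.
  `(x, y, δ)` is an `E`-triangle. -/
  real : ∀ {a b c : C}, (a ⟶ b) → (b ⟶ c) → ((E.obj (op c)).obj a) → Prop
  /-- every extension is realized by some conflation. -/
  real_exists : ∀ {a c : C} (δ : (E.obj (op c)).obj a),
    ∃ (b : C) (x : a ⟶ b) (y : b ⟶ c), real x y δ
  /-- the realization is well defined on equivalence classes of sequences. -/
  real_congr : ∀ {a b b' c : C} {x : a ⟶ b} {y : b ⟶ c} {x' : a ⟶ b'} {y' : b' ⟶ c}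
    {δ : (E.obj (op c)).obj a} (e : b ≅ b'),
      x ≫ e.hom = x' → e.hom ≫ y' = y → real x y δ → real x' y' δ
  /-- any two realizations of the same extension are equivalent sequences. -/
  real_unique : ∀ {a b b' c : C} {x : a ⟶ b} {y : b ⟶ c} {x' : a ⟶ b'} {y' : b' ⟶ c}
    {δ : (E.obj (op c)).obj a}, real x y δ → real x' y' δ →
      ∃ e : b ≅ b', x ≫ e.hom = x' ∧ e.hom ≫ y' = y
  /-- (ET2) realization of morphisms of extensions: if `f_* δ = g^* δ'` then `(f, g)` extends to
  a morphism of the realizing `E`-triangles. -/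
  real_lift : ∀ {a b c a' b' c' : C} {x : a ⟶ b} {y : b ⟶ c} {x' : a' ⟶ b'} {y' : b' ⟶ c'}
    {δ : (E.obj (op c)).obj a} {δ' : (E.obj (op c')).obj a'} (f : a ⟶ a') (g : c ⟶ c'),
      real x y δ → real x' y' δ' →
      ((E.obj (op c)).map f) δ = ((E.map g.op).app a') δ' →
      ∃ m : b ⟶ b', x ≫ m = f ≫ x' ∧ m ≫ y' = y ≫ g
  /-- the realization is additive, part (i): split extensions are realized by split sequences. -/
  real_zero : ∀ a c : C,
    real (biprod.inl : a ⟶ a ⊞ c) (biprod.snd : a ⊞ c ⟶ c) (0 : (E.obj (op c)).obj a)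
  /-- the realization is additive, part (ii): it commutes with direct sums. -/
  real_sum : ∀ {a b c a' b' c' : C} {x : a ⟶ b} {y : b ⟶ c} {x' : a' ⟶ b'} {y' : b' ⟶ c'}
    {δ : (E.obj (op c)).obj a} {δ' : (E.obj (op c')).obj a'},
      real x y δ → real x' y' δ' →
      real (biprod.map x x') (biprod.map y y')
        (((E.map (biprod.fst : c ⊞ c' ⟶ c).op).app (a ⊞ a'))
            (((E.obj (op c)).map (biprod.inl : a ⟶ a ⊞ a')) δ) +
         ((E.map (biprod.snd : c ⊞ c' ⟶ c').op).app (a ⊞ a'))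
            (((E.obj (op c')).map (biprod.inr : a' ⟶ a ⊞ a')) δ'))
  /-- (ET3). -/
  et3 : ∀ {a b c a' b' c' : C} {x : a ⟶ b} {y : b ⟶ c} {x' : a' ⟶ b'} {y' : b' ⟶ c'}
    {δ : (E.obj (op c)).obj a} {δ' : (E.obj (op c')).obj a'} (f : a ⟶ a') (m : b ⟶ b'),
      real x y δ → real x' y' δ' → x ≫ m = f ≫ x' →
      ∃ g : c ⟶ c', y ≫ g = m ≫ y' ∧ ((E.obj (op c)).map f) δ = ((E.map g.op).app a') δ'
  /-- (ET3)ᵒᵖ. -/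
  et3op : ∀ {a b c a' b' c' : C} {x : a ⟶ b} {y : b ⟶ c} {x' : a' ⟶ b'} {y' : b' ⟶ c'}
    {δ : (E.obj (op c)).obj a} {δ' : (E.obj (op c')).obj a'} (g : c ⟶ c') (m : b ⟶ b'),
      real x y δ → real x' y' δ' → m ≫ y' = y ≫ g →
      ∃ f : a ⟶ a', x ≫ m = f ≫ x' ∧ ((E.obj (op c)).map f) δ = ((E.map g.op).app a') δ'
  /-- (ET4). -/
  et4 : ∀ {A B D F G : C} {f : A ⟶ B} {f' : B ⟶ D} {g : B ⟶ G} {g' : G ⟶ F}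
    {δ : (E.obj (op D)).obj A} {δ' : (E.obj (op F)).obj B},
      real f f' δ → real g g' δ' →
      ∃ (Eo : C) (d : D ⟶ Eo) (e : Eo ⟶ F) (h' : G ⟶ Eo) (δ'' : (E.obj (op Eo)).obj A),
        real (f ≫ g) h' δ'' ∧ f' ≫ d = g ≫ h' ∧ h' ≫ e = g' ∧
        real d e (((E.obj (op F)).map f') δ') ∧
        ((E.map d.op).app A) δ'' = δ ∧
        ((E.obj (op Eo)).map f) δ'' = ((E.map e.op).app B) δ'
  /-- (ET4)ᵒᵖ. -/
  et4op : ∀ {A B D F Cc : C} {f' : D ⟶ A} {f : A ⟶ B} {g' : F ⟶ B} {g : B ⟶ Cc}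
    {δ : (E.obj (op B)).obj D} {δ' : (E.obj (op Cc)).obj F},
      real f' f δ → real g' g δ' →
      ∃ (Eo : C) (d : D ⟶ Eo) (e : Eo ⟶ F) (h' : Eo ⟶ A) (δ'' : (E.obj (op Cc)).obj Eo),
        real h' (f ≫ g) δ'' ∧ d ≫ h' = f' ∧ h' ≫ f = e ≫ g' ∧
        real d e (((E.map g'.op).app D) δ) ∧
        ((E.obj (op Cc)).map e) δ'' = δ' ∧
        ((E.obj (op B)).map d) δ = ((E.map g.op).app Eo) δ''

end ExtCatDef

namespace ExtCat

variable {K : Type w} [Field K]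
variable {C : Type u} [Category.{v} C] [Preadditive C] [Linear K C] [HasFiniteBiproducts C]
variable (ξ : ExtCat K C)

/-- The extension group `E(c, a)`. -/
abbrev Ext (c a : C) : Type v := (ξ.E.obj (op c)).obj a

/-- Pushforward `f_* : E(c, a) → E(c, a')` along `f : a ⟶ a'`. -/
def push (c : C) {a a' : C} (f : a ⟶ a') (δ : ξ.Ext c a) : ξ.Ext c a' :=
  ((ξ.E.obj (op c)).map f) δ

/-- Pullback `g^* : E(c, a) → E(c', a)` along `g : c' ⟶ c`. -/
def pull (a : C) {c c' : C} (g : c' ⟶ c) (δ : ξ.Ext c a) : ξ.Ext c' a :=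
  ((ξ.E.map g.op).app a) δ

/-- An object `P` is projective if `E(P, A) = 0` for all `A`. -/
def ProjObj (P : C) : Prop := ∀ (A : C) (δ : ξ.Ext P A), δ = 0

/-- An object `I` is injective if `E(A, I) = 0` for all `A`. -/
def InjObj (I : C) : Prop := ∀ (A : C) (δ : ξ.Ext A I), δ = 0

end ExtCat

section STermDefs

variable {K : Type w} [Field K]
variable {C : Type u} [Category.{v} C] [Preadditive C] [HasFiniteBiproducts C]

/-- An element of the set `S(X)`: a non-split `E`-triangle `A ⟶ B ⟶ X` ending at `X`
whose first term `A` is indecomposable. -/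
structure STerm (ξ : ExtCat K C) (X : C) where
  A : C
  B : C
  f : A ⟶ B
  g : B ⟶ X
  δ : ξ.Ext X A
  isReal : ξ.real f g δ
  nonsplit : δ ≠ 0
  indec : Indec A

/-- `s > t` in `S(X)`: there is `f : A_s ⟶ A_t` with `f_* δ_s = δ_t`, i.e. a morphism of
`E`-triangles from `s` to `t` restricting to the identity on `X`. -/
def STerm.Gt {ξ : ExtCat K C} {X : C} (s t : STerm ξ X) : Prop :=
  ∃ f : s.A ⟶ t.A, ξ.push X f s.δ = t.δ

/-- `s ∼ t` in `S(X)`: such an `f` can be chosen to be an isomorphism. -/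
def STerm.Sim {ξ : ExtCat K C} {X : C} (s t : STerm ξ X) : Prop :=
  ∃ f : s.A ⟶ t.A, IsIso f ∧ ξ.push X f s.δ = t.δ

/-- An element of the set `S'(X)`: a non-split `E`-triangle `X ⟶ B ⟶ A` starting at `X`
whose last term `A` is indecomposable. -/
structure SPrimeTerm (ξ : ExtCat K C) (X : C) where
  A : C
  B : C
  f : X ⟶ B
  g : B ⟶ A
  δ : ξ.Ext A X
  isReal : ξ.real f g δ
  nonsplit : δ ≠ 0
  indec : Indec A

/-- `s > t` in `S'(X)`: there is `f : A_t ⟶ A_s` with `f^* δ_s = δ_t`. -/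
def SPrimeTerm.Gt {ξ : ExtCat K C} {X : C} (s t : SPrimeTerm ξ X) : Prop :=
  ∃ f : t.A ⟶ s.A, ξ.pull X f s.δ = t.δ

/-- `s ∼ t` in `S'(X)`: such an `f` can be chosen to be an isomorphism. -/
def SPrimeTerm.Sim {ξ : ExtCat K C} {X : C} (s t : SPrimeTerm ξ X) : Prop :=
  ∃ f : t.A ⟶ s.A, IsIso f ∧ ξ.pull X f s.δ = t.δ

end STermDefs

section Prelims
set_option linter.unusedSectionVars false

variable {K : Type w} [Field K]
variable {C : Type u} [Category.{v} C] [Preadditive C] [Linear K C] [HasFiniteBiproducts C]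
variable (ξ : ExtCat K C)

namespace ExtCat

@[simp] lemma push_id (c : C) {a : C} (δ : ξ.Ext c a) : ξ.push c (𝟙 a) δ = δ := by
  simp [ExtCat.push]

lemma push_comp (c : C) {a a' a'' : C} (f : a ⟶ a') (g : a' ⟶ a'') (δ : ξ.Ext c a) :
    ξ.push c (f ≫ g) δ = ξ.push c g (ξ.push c f δ) := by
  simp only [ExtCat.push, Functor.map_comp]; rfl

@[simp] lemma pull_id {a c : C} (δ : ξ.Ext c a) : ξ.pull a (𝟙 c) δ = δ := by
  simp [ExtCat.pull]

lemma pull_comp {a c c' c'' : C} (g' : c' ⟶ c) (g'' : c'' ⟶ c') (δ : ξ.Ext c a) :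
    ξ.pull a (g'' ≫ g') δ = ξ.pull a g'' (ξ.pull a g' δ) := by
  simp only [ExtCat.pull, op_comp, Functor.map_comp, NatTrans.comp_app]; rfl

lemma pull_push {a a' c c' : C} (f : a ⟶ a') (g : c' ⟶ c) (δ : ξ.Ext c a) :
    ξ.pull a' g (ξ.push c f δ) = ξ.push c' f (ξ.pull a g δ) := by
  have h := (ξ.E.map g.op).naturality f
  exact (ConcreteCategory.congr_hom h δ)

@[simp] lemma push_zero_elt (c : C) {a a' : C} (f : a ⟶ a') :
    ξ.push c f (0 : ξ.Ext c a) = 0 := map_zero _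

@[simp] lemma pull_zero_elt {a : C} {c c' : C} (g : c' ⟶ c) :
    ξ.pull a g (0 : ξ.Ext c a) = 0 := map_zero _

@[simp] lemma push_zero_mor (c : C) {a a' : C} (δ : ξ.Ext c a) :
    ξ.push c (0 : a ⟶ a') δ = 0 := by
  haveI := ξ.additive₂ (op c)
  rw [ExtCat.push, Functor.map_zero]
  rfl

@[simp] lemma pull_zero_mor {a : C} {c c' : C} (δ : ξ.Ext c a) :
    ξ.pull a (0 : c' ⟶ c) δ = 0 := by
  haveI := ξ.additive₁
  have : ((0 : c' ⟶ c).op) = 0 := rfl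
  rw [ExtCat.pull, this, Functor.map_zero]
  rfl

lemma push_add (c : C) {a a' : C} (f g : a ⟶ a') (δ : ξ.Ext c a) :
    ξ.push c (f + g) δ = ξ.push c f δ + ξ.push c g δ := by
  haveI := ξ.additive₂ (op c)
  rw [ExtCat.push, Functor.map_add]
  rfl

lemma push_sub (c : C) {a a' : C} (f g : a ⟶ a') (δ : ξ.Ext c a) :
    ξ.push c (f - g) δ = ξ.push c f δ - ξ.push c g δ := by
  haveI := ξ.additive₂ (op c)
  rw [ExtCat.push, Functor.map_sub]
  rfl

lemma pull_add {a : C} {c c' : C} (g g' : c' ⟶ c) (δ : ξ.Ext c a) :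
    ξ.pull a (g + g') δ = ξ.pull a g δ + ξ.pull a g' δ := by
  haveI := ξ.additive₁
  have : ((g + g' : c' ⟶ c).op) = g.op + g'.op := rfl
  rw [ExtCat.pull, this, Functor.map_add]
  rfl

lemma pull_sub {a : C} {c c' : C} (g g' : c' ⟶ c) (δ : ξ.Ext c a) :
    ξ.pull a (g - g') δ = ξ.pull a g δ - ξ.pull a g' δ := by
  haveI := ξ.additive₁
  have : ((g - g' : c' ⟶ c).op) = g.op - g'.op := rfl
  rw [ExtCat.pull, this, Functor.map_sub]
  rfl

lemma push_sum (c : C) {a a' : C} {ι : Type*} (s : Finset ι) (g : ι → (a ⟶ a'))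
    (δ : ξ.Ext c a) : ξ.push c (∑ i ∈ s, g i) δ = ∑ i ∈ s, ξ.push c (g i) δ := by
  classical
  induction s using Finset.induction with
  | empty => simp
  | insert _ _ h ih => rw [Finset.sum_insert h, Finset.sum_insert h, push_add, ih]

lemma pull_sum {a : C} {c c' : C} {ι : Type*} (s : Finset ι) (g : ι → (c' ⟶ c))
    (δ : ξ.Ext c a) : ξ.pull a (∑ i ∈ s, g i) δ = ∑ i ∈ s, ξ.pull a (g i) δ := by
  classical
  induction s using Finset.induction with
  | empty => simp
  | insert _ _ h ih => rw [Finset.sum_insert h, Finset.sum_insert h, pull_add, ih]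

end ExtCat

end Prelims
section TriangleFacts
set_option linter.unusedSectionVars false

variable {K : Type w} [Field K]
variable {C : Type u} [Category.{v} C] [Preadditive C] [Linear K C] [HasFiniteBiproducts C]
variable (ξ : ExtCat K C)

namespace ExtCat

/-- realization of `0` by `M = M → 0`. -/
lemma real_id_zero (M : C) :
    ξ.real (𝟙 M) (0 : M ⟶ (0 : C)) (0 : ξ.Ext (0 : C) M) := by
  have hz : IsZero (0 : C) := isZero_zero C
  refine ξ.real_congr (b := M ⊞ (0 : C))
    (⟨biprod.fst, biprod.lift (𝟙 M) 0, ?_, ?_⟩ : M ⊞ (0 : C) ≅ M) ?_ ?_ (ξ.real_zero M 0)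
  · apply biprod.hom_ext
    · simp
    · exact hz.eq_of_tgt _ _
  · simp
  · simp
  · exact hz.eq_of_tgt _ _

/-- realization of `0` by `0 → M = M`. -/
lemma real_zero_id (M : C) :
    ξ.real (0 : (0 : C) ⟶ M) (𝟙 M) (0 : ξ.Ext M (0 : C)) := by
  have hz : IsZero (0 : C) := isZero_zero C
  refine ξ.real_congr (b := (0 : C) ⊞ M)
    (⟨biprod.snd, biprod.inr, ?_, ?_⟩ : (0 : C) ⊞ M ≅ M) ?_ ?_ (ξ.real_zero 0 M)
  · apply biprod.hom_ext
    · exact hz.eq_of_tgt _ _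
    · simp
  · simp
  · simp
  · simp

section Facts

variable {A B Xc : C} {x : A ⟶ B} {y : B ⟶ Xc} {δ : ξ.Ext Xc A} (htr : ξ.real x y δ)

/-- F1: pulling an extension back along its own deflation kills it. -/
lemma pull_defl (htr : ξ.real x y δ) : ξ.pull A y δ = 0 := by
  obtain ⟨f, _, h2⟩ := ξ.et3op (g := y) (m := (biprod.snd : A ⊞ B ⟶ B))
    (ξ.real_zero A B) htr rfl
  have : ((ξ.E.obj (op B)).map f) (0 : ξ.Ext B A) = 0 := map_zero _
  rw [this] at h2
  show ((ξ.E.map y.op).app A) δ = 0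
  exact h2.symm

/-- F1': pushing an extension forward along its own inflation kills it. -/
lemma push_infl (htr : ξ.real x y δ) : ξ.push Xc x δ = 0 := by
  obtain ⟨g, _, h2⟩ := ξ.et3 (f := x) (m := (biprod.inl : B ⟶ B ⊞ Xc))
    htr (ξ.real_zero B Xc) rfl
  have : ((ξ.E.map g.op).app B) (0 : ξ.Ext Xc B) = 0 := map_zero _
  show ((ξ.E.obj (op Xc)).map x) δ = 0
  rw [h2, this]

lemma delta_zero_of_retraction (htr : ξ.real x y δ) {r : Xc ⟶ B} (hr : r ≫ y = 𝟙 Xc) :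
    δ = 0 := by
  have : δ = ξ.pull A (r ≫ y) δ := by rw [hr, ξ.pull_id]
  rw [this, ξ.pull_comp, ξ.pull_defl htr, ξ.pull_zero_elt]

lemma delta_zero_of_section (htr : ξ.real x y δ) {p : B ⟶ A} (hp : x ≫ p = 𝟙 A) :
    δ = 0 := by
  have : δ = ξ.push Xc (x ≫ p) δ := by rw [hp, ξ.push_id]
  rw [this, ξ.push_comp, ξ.push_infl htr, ξ.push_zero_elt]

/-- F3: a morphism killing `δ` under pushout factors through the inflation. -/
lemma factor_infl (htr : ξ.real x y δ) {M : C} (f : A ⟶ M) (hf : ξ.push Xc f δ = 0) :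
    ∃ g : B ⟶ M, x ≫ g = f := by
  obtain ⟨m, h1, _⟩ := ξ.real_lift f (𝟙 Xc) htr (ξ.real_zero M Xc)
    (by show ξ.push Xc f δ = ((ξ.E.map (𝟙 Xc).op).app M) 0
        rw [hf]; exact (map_zero (((ξ.E.map (𝟙 Xc).op).app M).hom)).symm)
  exact ⟨m ≫ biprod.fst, by rw [← Category.assoc, h1]; simp⟩

/-- F4: a morphism killing `δ` under pullback lifts through the deflation. -/
lemma lift_defl (htr : ξ.real x y δ) {M : C} (v : M ⟶ Xc) (hv : ξ.pull A v δ = 0) :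
    ∃ k : M ⟶ B, k ≫ y = v := by
  obtain ⟨m, _, h2⟩ := ξ.real_lift (𝟙 A) v (ξ.real_zero A M) htr
    (by show ((ξ.E.obj (op M)).map (𝟙 A)) 0 = ξ.pull A v δ
        rw [hv]; exact map_zero (((ξ.E.obj (op M)).map (𝟙 A)).hom))
  exact ⟨biprod.inr ≫ m, by rw [Category.assoc, h2]; simp⟩

/-- F6: weak cokernel property of the deflation. -/
lemma weak_coker (htr : ξ.real x y δ) {M : C} (u : B ⟶ M) (hu : x ≫ u = 0) :
    ∃ w : Xc ⟶ M, y ≫ w = u := by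
  obtain ⟨g, h1, _⟩ := ξ.et3 (f := (0 : A ⟶ (0 : C))) (m := u) htr (ξ.real_zero_id M)
    (by rw [hu]; simp)
  exact ⟨g, by simpa using h1⟩

/-- F6': weak kernel property of the inflation. -/
lemma weak_ker (htr : ξ.real x y δ) {M : C} (v : M ⟶ B) (hv : v ≫ y = 0) :
    ∃ f : M ⟶ A, f ≫ x = v := by
  obtain ⟨f, h1, _⟩ := ξ.et3op (g := (0 : (0 : C) ⟶ Xc)) (m := v) (ξ.real_id_zero M) htr
    (by rw [hv]; simp)
  exact ⟨f, by simpa using h1.symm⟩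

/-- F2: an extension over `Xc` pulled to zero along the deflation is a pushout of `δ`. -/
lemma push_reach (htr : ξ.real x y δ) {M : C} (ε : ξ.Ext Xc M) (hε : ξ.pull M y ε = 0) :
    ∃ f : A ⟶ M, ξ.push Xc f δ = ε := by
  obtain ⟨N, xe, ye, hre⟩ := ξ.real_exists ε
  obtain ⟨m, _, h2⟩ := ξ.real_lift (𝟙 M) y (ξ.real_zero M B) hre
    (by show ((ξ.E.obj (op B)).map (𝟙 M)) 0 = ξ.pull M y ε
        rw [hε]; exact map_zero (((ξ.E.obj (op B)).map (𝟙 M)).hom))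
  have hb : (biprod.inr ≫ m) ≫ ye = y := by rw [Category.assoc, h2]; simp
  obtain ⟨f, _, h4⟩ := ξ.et3op (g := 𝟙 Xc) (m := biprod.inr ≫ m) htr hre
    (by rw [hb, Category.comp_id])
  refine ⟨f, ?_⟩
  have h6 : ((ξ.E.map (𝟙 Xc).op).app M) ε = ε := by
    have h5 : ((𝟙 Xc).op : op Xc ⟶ op Xc) = 𝟙 (op Xc) := rfl
    rw [h5, ξ.E.map_id]; rfl
  show ((ξ.E.obj (op Xc)).map f) δ = ε
  rw [h4, h6]

/-- F2 dual: an extension pushed to zero along the inflation is a pullback of `δ`. -/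
lemma pull_reach (htr : ξ.real x y δ) {M : C} (ε : ξ.Ext M A) (hε : ξ.push M x ε = 0) :
    ∃ f : M ⟶ Xc, ξ.pull A f δ = ε := by
  obtain ⟨N, xe, ye, hre⟩ := ξ.real_exists ε
  obtain ⟨m, h1, _⟩ := ξ.real_lift x (𝟙 M) hre (ξ.real_zero B M)
    (by show ((ξ.E.obj (op M)).map x) ε = ((ξ.E.map (𝟙 M).op).app B) 0
        rw [← ExtCat.push, hε]; exact (map_zero (((ξ.E.map (𝟙 M).op).app B).hom)).symm)
  have hb : xe ≫ (m ≫ biprod.fst) = x := by rw [← Category.assoc, h1]; simp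
  obtain ⟨g, _, h4⟩ := ξ.et3 (f := 𝟙 A) (m := m ≫ biprod.fst) hre htr
    (by rw [hb, Category.id_comp])
  refine ⟨g, ?_⟩
  have h6 : ((ξ.E.obj (op M)).map (𝟙 A)) ε = ε := by rw [(ξ.E.obj (op M)).map_id]; rfl
  show ((ξ.E.map g.op).app A) δ = ε
  rw [← h4, h6]

end Facts

end ExtCat

end TriangleFacts
section KSLemmas
set_option linter.unusedSectionVars false
set_option maxHeartbeats 1000000

section RingFacts

variable {R : Type*} [Ring R] [IsLocalRing R]

lemma isUnit_of_left_inverse {y l : R} (h : l * y = 1) : IsUnit y := by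
  have hee : y * l * (y * l) = y * l := by
    rw [mul_assoc y l (y*l), ← mul_assoc l y l, h, one_mul]
  rcases IsLocalRing.isUnit_or_isUnit_of_add_one
      (a := y * l) (b := 1 - y * l) (by abel) with he | he
  · have h1 : y * l = 1 := he.mul_left_cancel (by rw [hee, mul_one])
    exact ⟨⟨y, l, h1, h⟩, rfl⟩
  · obtain ⟨u, hu⟩ := he
    have h2 : (1 - y * l) * (y * l) = 0 := by rw [sub_mul, one_mul, hee, sub_self]
    have he0 : y * l = 0 := by
      have h3 : (↑u⁻¹ : R) * ((1 - y * l) * (y * l)) = y * l := by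
        rw [← hu, ← mul_assoc, Units.inv_mul, one_mul]
      rw [h2, mul_zero] at h3; exact h3.symm
    have h10 : (1 : R) = 0 := by
      calc (1 : R) = l * y * (l * y) := by rw [h, one_mul]
      _ = l * (y * l) * y := by rw [mul_assoc l y (l*y), ← mul_assoc y l y, ← mul_assoc]
      _ = 0 := by rw [he0, mul_zero, zero_mul]
    haveI := subsingleton_of_zero_eq_one h10.symm
    exact ⟨⟨y, y, Subsingleton.elim _ _, Subsingleton.elim _ _⟩, rfl⟩

lemma isUnit_of_right_inverse {y r : R} (h : y * r = 1) : IsUnit y := by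
  have hee : r * y * (r * y) = r * y := by
    rw [mul_assoc r y (r*y), ← mul_assoc y r y, h, one_mul]
  rcases IsLocalRing.isUnit_or_isUnit_of_add_one
      (a := r * y) (b := 1 - r * y) (by abel) with he | he
  · have h1 : r * y = 1 := he.mul_left_cancel (by rw [hee, mul_one])
    exact ⟨⟨y, r, h, h1⟩, rfl⟩
  · obtain ⟨u, hu⟩ := he
    have h2 : (1 - r * y) * (r * y) = 0 := by rw [sub_mul, one_mul, hee, sub_self]
    have he0 : r * y = 0 := by
      have h3 : (↑u⁻¹ : R) * ((1 - r * y) * (r * y)) = r * y := by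
        rw [← hu, ← mul_assoc, Units.inv_mul, one_mul]
      rw [h2, mul_zero] at h3; exact h3.symm
    have h10 : (1 : R) = 0 := by
      calc (1 : R) = y * r * (y * r) := by rw [h, one_mul]
      _ = y * (r * y) * r := by rw [mul_assoc y r (y*r), ← mul_assoc r y r, ← mul_assoc]
      _ = 0 := by rw [he0, mul_zero, zero_mul]
    haveI := subsingleton_of_zero_eq_one h10.symm
    exact ⟨⟨y, y, Subsingleton.elim _ _, Subsingleton.elim _ _⟩, rfl⟩

lemma isUnit_left_of_isUnit_mul {x y : R} (h : IsUnit (x * y)) : IsUnit x := by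
  obtain ⟨u, hu⟩ := h
  refine isUnit_of_right_inverse (r := y * ↑u⁻¹) ?_
  rw [← mul_assoc, ← hu, Units.mul_inv]

lemma isUnit_right_of_isUnit_mul {x y : R} (h : IsUnit (x * y)) : IsUnit y := by
  obtain ⟨u, hu⟩ := h
  refine isUnit_of_left_inverse (l := ↑u⁻¹ * x) ?_
  rw [mul_assoc, ← hu, Units.inv_mul]

end RingFacts

section CatFacts

variable {C : Type u} [Category.{v} C] [Preadditive C] [HasFiniteBiproducts C]

/-- two-sided inverses for a unit in an endomorphism ring, as morphisms. -/
lemma exists_inv_of_isUnit {M : C} {a : CategoryTheory.End M} (h : IsUnit a) :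
    ∃ b : M ⟶ M, a ≫ b = 𝟙 M ∧ b ≫ a = 𝟙 M := by
  obtain ⟨u, hu⟩ := h
  refine ⟨(↑u⁻¹ : CategoryTheory.End M), ?_, ?_⟩
  · show ((↑u⁻¹ : CategoryTheory.End M) * a : CategoryTheory.End M) = 1
    rw [← hu, Units.inv_mul]
  · show ((a : CategoryTheory.End M) * ↑u⁻¹ : CategoryTheory.End M) = 1
    rw [← hu, Units.mul_inv]


/-- view an endomorphism as an element of the endomorphism ring. -/
def toEnd {M : C} (f : M ⟶ M) : CategoryTheory.End M := f

lemma isUnit_end_of_inv {M : C} {a b : M ⟶ M}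
    (h1 : a ≫ b = 𝟙 M) (h2 : b ≫ a = 𝟙 M) : IsUnit (toEnd a) :=
  ⟨⟨toEnd a, toEnd b, h2, h1⟩, rfl⟩

lemma hom_unit_or {M : C} [IsLocalRing (CategoryTheory.End M)] (a : M ⟶ M) :
    (∃ b, a ≫ b = 𝟙 M ∧ b ≫ a = 𝟙 M) ∨
    (∃ b, (𝟙 M - a) ≫ b = 𝟙 M ∧ b ≫ (𝟙 M - a) = 𝟙 M) := by
  rcases IsLocalRing.isUnit_or_isUnit_of_add_one
      (a := toEnd a) (b := 1 - toEnd a) (by abel) with h | h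
  · exact Or.inl (exists_inv_of_isUnit h)
  · exact Or.inr (exists_inv_of_isUnit h)

lemma hom_inv_fst_of_comp {M : C} [IsLocalRing (CategoryTheory.End M)] {r h : M ⟶ M}
    (hu : ∃ b, (r ≫ h) ≫ b = 𝟙 M ∧ b ≫ (r ≫ h) = 𝟙 M) :
    ∃ b, r ≫ b = 𝟙 M ∧ b ≫ r = 𝟙 M := by
  obtain ⟨b, hb1, hb2⟩ := hu
  have hu' : IsUnit (toEnd h * toEnd r) := isUnit_end_of_inv hb1 hb2
  exact exists_inv_of_isUnit (isUnit_right_of_isUnit_mul hu')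

lemma hom_inv_snd_of_comp {M : C} [IsLocalRing (CategoryTheory.End M)] {r h : M ⟶ M}
    (hu : ∃ b, (r ≫ h) ≫ b = 𝟙 M ∧ b ≫ (r ≫ h) = 𝟙 M) :
    ∃ b, h ≫ b = 𝟙 M ∧ b ≫ h = 𝟙 M := by
  obtain ⟨b, hb1, hb2⟩ := hu
  have hu' : IsUnit (toEnd h * toEnd r) := isUnit_end_of_inv hb1 hb2
  exact exists_inv_of_isUnit (isUnit_left_of_isUnit_mul hu')

lemma indec_of_isLocalRing {A : C} (h : IsLocalRing (CategoryTheory.End A)) : Indec A := by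
  constructor
  · intro hz
    have h1 : (1 : CategoryTheory.End A) = 0 := hz.eq_of_src _ _
    exact one_ne_zero h1
  · rintro Y Z ⟨e⟩
    let p : CategoryTheory.End A := e.hom ≫ biprod.fst ≫ biprod.inl ≫ e.inv
    let q : CategoryTheory.End A := e.hom ≫ biprod.snd ≫ biprod.inr ≫ e.inv
    have hpq : p + q = 1 := by
      show e.hom ≫ biprod.fst ≫ biprod.inl ≫ e.inv + e.hom ≫ biprod.snd ≫ biprod.inr ≫ e.inv
          = 𝟙 A
      have htot := biprod.total (X := Y) (Y := Z)
      calc e.hom ≫ biprod.fst ≫ biprod.inl ≫ e.inv + e.hom ≫ biprod.snd ≫ biprod.inr ≫ e.inv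
          = e.hom ≫ (biprod.fst ≫ biprod.inl + biprod.snd ≫ biprod.inr) ≫ e.inv := by
            rw [Preadditive.add_comp, Preadditive.comp_add]; simp [Category.assoc]
        _ = 𝟙 A := by rw [htot]; simp
    rcases IsLocalRing.isUnit_or_isUnit_of_add_one hpq with hu | hu
    · -- p is a unit, so p = 1, q = 0, and Z is zero
      have hidem : p * p = p := by
        show (e.hom ≫ biprod.fst ≫ biprod.inl ≫ e.inv) ≫
            (e.hom ≫ biprod.fst ≫ biprod.inl ≫ e.inv) = e.hom ≫ biprod.fst ≫ biprod.inl ≫ e.inv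
        simp
      have hp1 : p = 1 := hu.mul_left_cancel (by rw [hidem, mul_one])
      have hq0 : q = 0 := by
        have := hpq; rw [hp1] at this
        have h2 : (1 : CategoryTheory.End A) + q = 1 + 0 := by rw [add_zero]; exact this
        exact add_left_cancel h2
      right
      have hz : biprod.snd ≫ biprod.inr = (0 : Y ⊞ Z ⟶ Y ⊞ Z) := by
        have h3 : e.inv ≫ q ≫ e.hom = biprod.snd ≫ biprod.inr := by
          show e.inv ≫ (e.hom ≫ biprod.snd ≫ biprod.inr ≫ e.inv) ≫ e.hom = _
          simp
        rw [← h3, hq0]; simp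
      rw [IsZero.iff_id_eq_zero]
      have h4 := congrArg (fun m => biprod.inr ≫ m ≫ biprod.snd) hz
      simpa using h4
    · -- q is a unit, so Y is zero
      have hidem : q * q = q := by
        show (e.hom ≫ biprod.snd ≫ biprod.inr ≫ e.inv) ≫
            (e.hom ≫ biprod.snd ≫ biprod.inr ≫ e.inv) = e.hom ≫ biprod.snd ≫ biprod.inr ≫ e.inv
        simp
      have hq1 : q = 1 := hu.mul_left_cancel (by rw [hidem, mul_one])
      have hp0 : p = 0 := by
        have := hpq; rw [hq1] at this
        have h2 : p + (1 : CategoryTheory.End A) = 0 + 1 := by rw [zero_add]; exact this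
        exact add_right_cancel h2
      left
      have hz : biprod.fst ≫ biprod.inl = (0 : Y ⊞ Z ⟶ Y ⊞ Z) := by
        have h3 : e.inv ≫ p ≫ e.hom = biprod.fst ≫ biprod.inl := by
          show e.inv ≫ (e.hom ≫ biprod.fst ≫ biprod.inl ≫ e.inv) ≫ e.hom = _
          simp
        rw [← h3, hp0]; simp
      rw [IsZero.iff_id_eq_zero]
      have h4 := congrArg (fun m => biprod.inl ≫ m ≫ biprod.fst) hz
      simpa using h4

/-- `Y ⊞ Z ≅ Y` when `Z` is zero. -/
def isoBiprodZeroRight {Y Z : C} (hz : IsZero Z) : Y ⊞ Z ≅ Y where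
  hom := biprod.fst
  inv := biprod.lift (𝟙 Y) 0
  hom_inv_id := by
    apply biprod.hom_ext
    · simp
    · exact hz.eq_of_tgt _ _
  inv_hom_id := by simp

/-- `Y ⊞ Z ≅ Z` when `Y` is zero. -/
def isoBiprodZeroLeft {Y Z : C} (hz : IsZero Y) : Y ⊞ Z ≅ Z where
  hom := biprod.snd
  inv := biprod.inr
  hom_inv_id := by
    apply biprod.hom_ext
    · exact hz.eq_of_tgt _ _
    · simp
  inv_hom_id := by simp

lemma isZero_biproduct_fin_zero (f : Fin 0 → C) : IsZero (⨁ f) := by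
  rw [IsZero.iff_id_eq_zero, ← biproduct.total]
  simp

/-- peeling off the first summand of a finite biproduct. -/
def biprodFinSucc {n : ℕ} (f : Fin (n + 1) → C) :
    (⨁ f) ≅ (f 0) ⊞ (⨁ fun i : Fin n => f i.succ) where
  hom := biprod.lift (biproduct.π f 0) (biproduct.lift fun i => biproduct.π f i.succ)
  inv := biprod.desc (biproduct.ι f 0) (biproduct.desc fun i => biproduct.ι f i.succ)
  hom_inv_id := by
    rw [biprod.lift_desc, biproduct.lift_desc, ← biproduct.total, Fin.sum_univ_succ]
  inv_hom_id := by
    apply biprod.hom_ext'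
    · apply biprod.hom_ext
      · simp
      · simp only [Category.assoc, biprod.inl_desc_assoc, biprod.lift_snd, biprod.inl_snd]
        apply biproduct.hom_ext
        intro j
        simp [biproduct.ι_π_ne _ (Fin.succ_ne_zero j).symm]
    · apply biprod.hom_ext
      · simp only [Category.assoc, biprod.inr_desc_assoc, biprod.lift_fst, biprod.inr_fst]
        apply biproduct.hom_ext'
        intro j
        simp [biproduct.ι_π_ne _ (Fin.succ_ne_zero j)]
      · simp only [Category.assoc, biprod.inr_desc_assoc, biprod.lift_snd, biprod.inr_snd,
          Category.comp_id]
        apply biproduct.hom_ext'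
        intro j
        apply biproduct.hom_ext
        intro i
        by_cases h : j = i
        · subst h; simp
        · simp [biproduct.ι_π_ne _ ((Fin.succ_injective n).ne h),
            biproduct.ι_π_ne _ h]

lemma isLocalRing_end_of_iso {A B : C} (e : A ≅ B) (h : IsLocalRing (CategoryTheory.End B)) :
    IsLocalRing (CategoryTheory.End A) := by
  let φ : CategoryTheory.End A →+* CategoryTheory.End B :=
    { toFun := fun g => e.inv ≫ g ≫ e.hom
      map_one' := by show e.inv ≫ 𝟙 A ≫ e.hom = 𝟙 B; simp
      map_mul' := fun g g' => by
        show e.inv ≫ (g' ≫ g) ≫ e.hom = (e.inv ≫ g' ≫ e.hom) ≫ (e.inv ≫ g ≫ e.hom)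
        simp
      map_zero' := by show e.inv ≫ 0 ≫ e.hom = 0; simp
      map_add' := fun g g' => by
        show e.inv ≫ (g + g') ≫ e.hom = (e.inv ≫ g ≫ e.hom) + (e.inv ≫ g' ≫ e.hom)
        rw [Preadditive.add_comp, Preadditive.comp_add] }
  let ψ : CategoryTheory.End B →+* CategoryTheory.End A :=
    { toFun := fun g => e.hom ≫ g ≫ e.inv
      map_one' := by show e.hom ≫ 𝟙 B ≫ e.inv = 𝟙 A; simp
      map_mul' := fun g g' => by
        show e.hom ≫ (g' ≫ g) ≫ e.inv = (e.hom ≫ g' ≫ e.inv) ≫ (e.hom ≫ g ≫ e.inv)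
        simp
      map_zero' := by show e.hom ≫ 0 ≫ e.inv = 0; simp
      map_add' := fun g g' => by
        show e.hom ≫ (g + g') ≫ e.inv = (e.hom ≫ g ≫ e.inv) + (e.hom ≫ g' ≫ e.inv)
        rw [Preadditive.add_comp, Preadditive.comp_add] }
  have hψφ : ∀ g : CategoryTheory.End A, ψ (φ g) = g := by
    intro g
    show e.hom ≫ (e.inv ≫ g ≫ e.hom) ≫ e.inv = g
    simp
  haveI : Nontrivial (CategoryTheory.End A) := by
    refine ⟨0, 1, fun h01 => ?_⟩
    have : (0 : CategoryTheory.End B) = 1 := by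
      have := congrArg φ h01
      rwa [map_zero, map_one] at this
    exact zero_ne_one this
  refine { isUnit_or_isUnit_of_add_one := ?_ }
  intro a b hab
  have : φ a + φ b = 1 := by rw [← map_add, hab, map_one]
  rcases IsLocalRing.isUnit_or_isUnit_of_add_one this with hu | hu
  · left; have := ψ.isUnit_map hu; rwa [hψφ] at this
  · right; have := ψ.isUnit_map hu; rwa [hψφ] at this

lemma isLocalRing_end_of_indec_aux :
    ∀ (n : ℕ) (f : Fin n → C), (∀ i, IsLocalRing (CategoryTheory.End (f i))) →
      ∀ (A : C), Indec A → (A ≅ ⨁ f) → IsLocalRing (CategoryTheory.End A) := by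
  intro n
  induction n with
  | zero =>
    intro f _ A hA e
    exact absurd ((isZero_biproduct_fin_zero f).of_iso e) hA.1
  | succ n ih =>
    intro f hloc A hA e
    have e2 := e ≪≫ biprodFinSucc f
    rcases hA.2 _ _ ⟨e2⟩ with h0 | hR
    · exact ih (fun i => f i.succ) (fun i => hloc _) A hA (e2 ≪≫ isoBiprodZeroLeft h0)
    · exact isLocalRing_end_of_iso (e2 ≪≫ isoBiprodZeroRight hR) (hloc 0)

lemma isLocalRing_end_of_indec (hKS : IsKrullSchmidt C) {A : C} (hA : Indec A) :
    IsLocalRing (CategoryTheory.End A) := by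
  obtain ⟨n, f, hloc, ⟨e⟩⟩ := hKS A
  exact isLocalRing_end_of_indec_aux n f hloc A hA e

end CatFacts

section Decompose

variable {K : Type w} [Field K]
variable {C : Type u} [Category.{v} C] [Preadditive C] [Linear K C] [HasFiniteBiproducts C]
variable (ξ : ExtCat K C)

lemma exists_indec_push (hKS : IsKrullSchmidt C) {Xc V : C} (δ : ξ.Ext Xc V) (hδ : δ ≠ 0) :
    ∃ (W : C) (φ : V ⟶ W), Indec W ∧ ξ.push Xc φ δ ≠ 0 := by
  obtain ⟨n, f, hloc, ⟨e⟩⟩ := hKS V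
  set δ' := ξ.push Xc e.hom δ with hδ'
  have hδ'0 : δ' ≠ 0 := by
    intro h0
    have : ξ.push Xc e.inv δ' = δ := by
      rw [hδ', ← ξ.push_comp, e.hom_inv_id, ξ.push_id]
    rw [h0, ξ.push_zero_elt] at this
    exact hδ this.symm
  have : ∃ i, ξ.push Xc (biproduct.π f i) δ' ≠ 0 := by
    by_contra hall
    push_neg at hall
    have h1 : δ' = ξ.push Xc (𝟙 (⨁ f)) δ' := (ξ.push_id _ _).symm
    rw [← biproduct.total, ξ.push_sum] at h1
    have h2 : ∀ i ∈ Finset.univ,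
        ξ.push Xc (biproduct.π f i ≫ biproduct.ι f i) δ' = 0 := by
      intro i _
      rw [ξ.push_comp, hall i, ξ.push_zero_elt]
    rw [Finset.sum_congr rfl h2, Finset.sum_const_zero] at h1
    exact hδ'0 h1
  obtain ⟨i, hi⟩ := this
  refine ⟨f i, e.hom ≫ biproduct.π f i, indec_of_isLocalRing (hloc i), ?_⟩
  rw [ξ.push_comp]
  exact hi

lemma exists_indec_pull (hKS : IsKrullSchmidt C) {Xc V : C} (δ : ξ.Ext V Xc) (hδ : δ ≠ 0) :
    ∃ (W : C) (φ : W ⟶ V), Indec W ∧ ξ.pull Xc φ δ ≠ 0 := by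
  obtain ⟨n, f, hloc, ⟨e⟩⟩ := hKS V
  set δ' := ξ.pull Xc e.inv δ with hδ'
  have hδ'0 : δ' ≠ 0 := by
    intro h0
    have : ξ.pull Xc e.hom δ' = δ := by
      rw [hδ', ← ξ.pull_comp, e.hom_inv_id, ξ.pull_id]
    rw [h0, ξ.pull_zero_elt] at this
    exact hδ this.symm
  have : ∃ i, ξ.pull Xc (biproduct.ι f i) δ' ≠ 0 := by
    by_contra hall
    push_neg at hall
    have h1 : δ' = ξ.pull Xc (𝟙 (⨁ f)) δ' := (ξ.pull_id _).symm
    rw [← biproduct.total, ξ.pull_sum] at h1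
    have h2 : ∀ i ∈ Finset.univ,
        ξ.pull Xc (biproduct.π f i ≫ biproduct.ι f i) δ' = 0 := by
      intro i _
      rw [ξ.pull_comp, hall i, ξ.pull_zero_elt]
    rw [Finset.sum_congr rfl h2, Finset.sum_const_zero] at h1
    exact hδ'0 h1
  obtain ⟨i, hi⟩ := this
  refine ⟨f i, biproduct.ι f i ≫ e.inv, indec_of_isLocalRing (hloc i), ?_⟩
  rw [ξ.pull_comp]
  exact hi

end Decompose

end KSLemmas
section MainHalves
set_option linter.unusedSectionVars false
set_option maxHeartbeats 2000000

variable {K : Type w} [Field K]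
variable {C : Type u} [Category.{v} C] [Preadditive C] [Linear K C] [HasFiniteBiproducts C]

/-- precomposition with a fixed morphism, as a `K`-linear map. -/
@[simps] def precompLinear (K : Type w) [Field K] {C : Type u} [Category.{v} C] [Preadditive C]
    [Linear K C] {A B M : C} (u : A ⟶ B) : (B ⟶ M) →ₗ[K] (A ⟶ M) where
  toFun g := u ≫ g
  map_add' g g' := by rw [Preadditive.comp_add]
  map_smul' r g := by rw [Linear.comp_smul]; rfl

/-- postcomposition with a fixed morphism, as a `K`-linear map. -/
@[simps] def postcompLinear (K : Type w) [Field K] {C : Type u} [Category.{v} C] [Preadditive C]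
    [Linear K C] {A B M : C} (u : B ⟶ A) : (M ⟶ B) →ₗ[K] (M ⟶ A) where
  toFun g := g ≫ u
  map_add' g g' := by rw [Preadditive.add_comp]
  map_smul' r g := by rw [Linear.smul_comp]; rfl

theorem exists_min_sterm (hKS : IsKrullSchmidt C) (ξ : ExtCat K C)
    (homFin : ∀ X Y : C, FiniteDimensional K (X ⟶ Y))
    (hLF : LocFinite C) (X : C) (hX : Indec X) (hP : ¬ ξ.ProjObj X) :
    ∃ s : STerm ξ X, ∀ t : STerm ξ X, t.Gt s := by
  classical
  haveI hXloc : IsLocalRing (CategoryTheory.End X) := isLocalRing_end_of_indec hKS hX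
  -- a first element of S(X)
  obtain ⟨A1, δ1, hδ1⟩ : ∃ (A1 : C) (δ1 : ξ.Ext X A1), δ1 ≠ 0 := by
    by_contra h; push_neg at h; exact hP (fun A δ => h A δ)
  obtain ⟨A₀, φ₀, hA₀, hδ₀⟩ := exists_indec_push ξ hKS δ1 hδ1
  obtain ⟨B₀, x₀, y₀, hr₀⟩ := ξ.real_exists (ξ.push X φ₀ δ1)
  let s₀ : STerm ξ X := ⟨A₀, B₀, x₀, y₀, ξ.push X φ₀ δ1, hr₀, hδ₀, hA₀⟩
  set δ₀ : ξ.Ext X A₀ := ξ.push X φ₀ δ1 with hδ₀def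
  -- the finite support list for A₀
  obtain ⟨⟨n, ind, hind⟩, -⟩ := hLF A₀ hA₀
  haveI : ∀ i : Fin n, FiniteDimensional K (A₀ ⟶ ind i) := fun i => homFin _ _
  -- the subspaces and the dimension function
  let V : ∀ (t : STerm ξ X), (A₀ ⟶ t.A) → ∀ i : Fin n, Submodule K (A₀ ⟶ ind i) :=
    fun t u i => LinearMap.range (precompLinear K u (M := ind i))
  let dfun : ∀ t : STerm ξ X, (A₀ ⟶ t.A) → ℕ :=
    fun t u => ∑ i, Module.finrank K ↥(V t u i)
  -- choose a minimizer
  let S : Set ℕ := {k | ∃ (t : STerm ξ X) (u : A₀ ⟶ t.A), ξ.push X u δ₀ = t.δ ∧ dfun t u = k}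
  have hS : S.Nonempty := ⟨dfun s₀ (𝟙 A₀), s₀, 𝟙 A₀, by rw [ξ.push_id], rfl⟩
  obtain ⟨m, um, hum, hdm⟩ := Nat.sInf_mem hS
  have hmin : ∀ (t : STerm ξ X) (u : A₀ ⟶ t.A), ξ.push X u δ₀ = t.δ → dfun m um ≤ dfun t u := by
    intro t u hu; rw [hdm]; exact Nat.sInf_le ⟨t, u, hu, rfl⟩
  -- the pushback property of the minimizer
  have P : ∀ (w : STerm ξ X) (g : m.A ⟶ w.A), ξ.push X g m.δ = w.δ →
      ∃ h : w.A ⟶ m.A, ξ.push X h w.δ = m.δ := by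
    intro w g hg
    have huw : ξ.push X (um ≫ g) δ₀ = w.δ := by rw [ξ.push_comp, hum, hg]
    have hle : ∀ i, V w (um ≫ g) i ≤ V m um i := by
      intro i x hx
      obtain ⟨g', rfl⟩ := hx
      exact ⟨g ≫ g', by simp [precompLinear]⟩
    have hVeq : ∀ i, V w (um ≫ g) i = V m um i := by
      have hrle : ∀ i, Module.finrank K ↥(V w (um ≫ g) i) ≤ Module.finrank K ↥(V m um i) :=
        fun i => Submodule.finrank_mono (hle i)
      have hsum : dfun m um ≤ dfun w (um ≫ g) := hmin w (um ≫ g) huw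
      have hall : ∀ i, Module.finrank K ↥(V m um i) ≤ Module.finrank K ↥(V w (um ≫ g) i) := by
        by_contra hco; push_neg at hco
        obtain ⟨i0, hi0⟩ := hco
        have : dfun w (um ≫ g) < dfun m um :=
          Finset.sum_lt_sum (fun i _ => hrle i) ⟨i0, Finset.mem_univ _, hi0⟩
        omega
      intro i
      exact Submodule.eq_of_le_of_finrank_le (hle i) (hall i)
    have hum0 : um ≠ 0 := by
      intro h0; rw [h0, ξ.push_zero_mor] at hum; exact m.nonsplit hum.symm
    obtain ⟨i0, ⟨eiso⟩⟩ := hind m.A m.indec ⟨um, hum0⟩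
    have hmem : um ≫ eiso.hom ∈ V m um i0 := ⟨eiso.hom, rfl⟩
    rw [← hVeq i0] at hmem
    obtain ⟨G, hG⟩ := hmem
    have hG' : (um ≫ g) ≫ G = um ≫ eiso.hom := hG
    refine ⟨G ≫ eiso.inv, ?_⟩
    have hcomp : (um ≫ g) ≫ (G ≫ eiso.inv) = um := by
      rw [← Category.assoc, hG', Category.assoc, eiso.hom_inv_id, Category.comp_id]
    rw [← huw, ← ξ.push_comp, hcomp, hum]
  -- the endomorphism ring of m.A is local, and non-units kill m.δ
  haveI hAloc : IsLocalRing (CategoryTheory.End m.A) := isLocalRing_end_of_indec hKS m.indec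
  have R1 : ∀ r : m.A ⟶ m.A, (¬ ∃ b, r ≫ b = 𝟙 m.A ∧ b ≫ r = 𝟙 m.A) →
      ξ.push X r m.δ = 0 := by
    intro r hr
    by_contra hne
    obtain ⟨Bw, xw, yw, hrw⟩ := ξ.real_exists (ξ.push X r m.δ)
    obtain ⟨h, hh⟩ := P ⟨m.A, Bw, xw, yw, ξ.push X r m.δ, hrw, hne, m.indec⟩ r rfl
    rw [← ξ.push_comp] at hh
    rcases hom_unit_or (r ≫ h) with hu | hu
    · exact hr (hom_inv_fst_of_comp hu)
    · obtain ⟨b, hb1, hb2⟩ := hu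
      have hz : ξ.push X (𝟙 m.A - r ≫ h) m.δ = 0 := by
        rw [ξ.push_sub, ξ.push_id, hh, sub_self]
      have hδ0 : m.δ = 0 := by
        have h5 : m.δ = ξ.push X ((𝟙 m.A - r ≫ h) ≫ b) m.δ := by rw [hb1, ξ.push_id]
        rw [h5, ξ.push_comp, hz, ξ.push_zero_elt]
      exact m.nonsplit hδ0
  -- morphisms out of m.A that do not kill m.δ are sections
  have L : ∀ (V' : C) (f : m.A ⟶ V'), ξ.push X f m.δ ≠ 0 → ∃ p : V' ⟶ m.A, f ≫ p = 𝟙 m.A := by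
    intro V' f hf
    obtain ⟨W, φ, hW, hWne⟩ := exists_indec_push ξ hKS (ξ.push X f m.δ) hf
    rw [← ξ.push_comp] at hWne
    obtain ⟨Bw, xw, yw, hrw⟩ := ξ.real_exists (ξ.push X (f ≫ φ) m.δ)
    obtain ⟨h, hh⟩ := P ⟨W, Bw, xw, yw, ξ.push X (f ≫ φ) m.δ, hrw, hWne, hW⟩ (f ≫ φ) rfl
    rw [← ξ.push_comp] at hh
    have hu : ∃ b, ((f ≫ φ) ≫ h) ≫ b = 𝟙 m.A ∧ b ≫ ((f ≫ φ) ≫ h) = 𝟙 m.A := by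
      by_contra hnu
      rw [R1 _ hnu] at hh
      exact m.nonsplit hh.symm
    obtain ⟨b, hb1, hb2⟩ := hu
    refine ⟨φ ≫ h ≫ b, ?_⟩
    calc f ≫ φ ≫ h ≫ b = ((f ≫ φ) ≫ h) ≫ b := by simp only [Category.assoc]
    _ = 𝟙 m.A := hb1
  -- the minimizer works
  refine ⟨m, fun t => ?_⟩
  show ∃ f : t.A ⟶ m.A, ξ.push X f t.δ = m.δ
  by_cases hε : ξ.pull m.A t.g m.δ = 0
  · exact ξ.push_reach t.isReal m.δ hε
  · obtain ⟨E, aε, pε, hrε⟩ := ξ.real_exists (ξ.pull m.A t.g m.δ)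
    obtain ⟨M, hM1, hM2⟩ := ξ.real_lift (𝟙 m.A) t.g hrε m.isReal (by
      show ξ.push t.B (𝟙 m.A) (ξ.pull m.A t.g m.δ) = ξ.pull m.A t.g m.δ
      rw [ξ.push_id])
    have haε : ξ.push X aε m.δ = 0 := by
      by_contra hne
      obtain ⟨p, hp⟩ := L E aε hne
      exact hε (ξ.delta_zero_of_section hrε hp)
    obtain ⟨h, hh⟩ := ξ.factor_infl m.isReal aε haε
    have hphi : m.f ≫ (𝟙 m.B - h ≫ M) = 0 := by
      rw [Preadditive.comp_sub, Category.comp_id, ← Category.assoc, hh, hM1, Category.id_comp,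
        sub_self]
    obtain ⟨wmap, hwmap⟩ := ξ.weak_coker m.isReal _ hphi
    have hstep : m.g ≫ (wmap ≫ m.g) = m.g - (h ≫ pε) ≫ t.g := by
      rw [← Category.assoc, hwmap, Preadditive.sub_comp, Category.id_comp, Category.assoc, hM2,
        ← Category.assoc]
    have hζu : ∃ b, (𝟙 X - wmap ≫ m.g) ≫ b = 𝟙 X ∧ b ≫ (𝟙 X - wmap ≫ m.g) = 𝟙 X := by
      rcases hom_unit_or (wmap ≫ m.g) with hu | hu
      · obtain ⟨b, hb1, hb2⟩ := hu
        have hr : (b ≫ wmap) ≫ m.g = 𝟙 X := by rw [Category.assoc]; exact hb2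
        exact absurd (ξ.delta_zero_of_retraction m.isReal hr) m.nonsplit
      · exact hu
    obtain ⟨zi, hz1, hz2⟩ := hζu
    have hζδ : ξ.pull m.A (𝟙 X - wmap ≫ m.g) m.δ = m.δ := by
      rw [ξ.pull_sub, ξ.pull_id, ξ.pull_comp, ξ.pull_defl m.isReal, ξ.pull_zero_elt, sub_zero]
    have hζiδ : ξ.pull m.A zi m.δ = m.δ := by
      conv_lhs => rw [← hζδ]
      rw [← ξ.pull_comp, hz2, ξ.pull_id]
    have hδt' : ξ.pull t.A (𝟙 X - wmap ≫ m.g) t.δ ≠ 0 := by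
      intro h0
      have h1 : ξ.pull t.A zi (ξ.pull t.A (𝟙 X - wmap ≫ m.g) t.δ) = t.δ := by
        rw [← ξ.pull_comp, hz2, ξ.pull_id]
      rw [h0, ξ.pull_zero_elt] at h1
      exact t.nonsplit h1.symm
    have hcompζ : m.g ≫ (𝟙 X - wmap ≫ m.g) = (h ≫ pε) ≫ t.g := by
      rw [Preadditive.comp_sub, Category.comp_id, hstep]
      abel
    have hpull0 : ξ.pull t.A m.g (ξ.pull t.A (𝟙 X - wmap ≫ m.g) t.δ) = 0 := by
      rw [← ξ.pull_comp, hcompζ, ξ.pull_comp, ξ.pull_defl t.isReal, ξ.pull_zero_elt]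
    obtain ⟨f₀, hf₀⟩ := ξ.push_reach m.isReal (ξ.pull t.A (𝟙 X - wmap ≫ m.g) t.δ) hpull0
    obtain ⟨Bw, xw, yw, hrw⟩ := ξ.real_exists (ξ.pull t.A (𝟙 X - wmap ≫ m.g) t.δ)
    obtain ⟨h₀, hh₀⟩ :=
      P ⟨t.A, Bw, xw, yw, ξ.pull t.A (𝟙 X - wmap ≫ m.g) t.δ, hrw, hδt', t.indec⟩ f₀ hf₀
    refine ⟨h₀, ?_⟩
    have hc : ξ.pull m.A (𝟙 X - wmap ≫ m.g) (ξ.push X h₀ t.δ) = m.δ := by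
      rw [ξ.pull_push]; exact hh₀
    calc ξ.push X h₀ t.δ
        = ξ.pull m.A (zi ≫ (𝟙 X - wmap ≫ m.g)) (ξ.push X h₀ t.δ) := by
          rw [hz2, ξ.pull_id]
      _ = ξ.pull m.A zi (ξ.pull m.A (𝟙 X - wmap ≫ m.g) (ξ.push X h₀ t.δ)) := by
          rw [ξ.pull_comp]
      _ = ξ.pull m.A zi m.δ := by rw [hc]
      _ = m.δ := hζiδ

end MainHalves
section MainDual
set_option linter.unusedSectionVars false
set_option maxHeartbeats 2000000

variable {K : Type w} [Field K]
variable {C : Type u} [Category.{v} C] [Preadditive C] [Linear K C] [HasFiniteBiproducts C]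

theorem exists_min_sprime (hKS : IsKrullSchmidt C) (ξ : ExtCat K C)
    (homFin : ∀ X Y : C, FiniteDimensional K (X ⟶ Y))
    (hLF : LocFinite C) (X : C) (hX : Indec X) (hI : ¬ ξ.InjObj X) :
    ∃ s : SPrimeTerm ξ X, ∀ t : SPrimeTerm ξ X, t.Gt s := by
  classical
  haveI hXloc : IsLocalRing (CategoryTheory.End X) := isLocalRing_end_of_indec hKS hX
  -- a first element of S'(X)
  obtain ⟨A1, δ1, hδ1⟩ : ∃ (A1 : C) (δ1 : ξ.Ext A1 X), δ1 ≠ 0 := by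
    by_contra h; push_neg at h; exact hI (fun A δ => h A δ)
  obtain ⟨A₀, φ₀, hA₀, hδ₀⟩ := exists_indec_pull ξ hKS δ1 hδ1
  obtain ⟨B₀, x₀, y₀, hr₀⟩ := ξ.real_exists (ξ.pull X φ₀ δ1)
  let s₀ : SPrimeTerm ξ X := ⟨A₀, B₀, x₀, y₀, ξ.pull X φ₀ δ1, hr₀, hδ₀, hA₀⟩
  set δ₀ : ξ.Ext A₀ X := ξ.pull X φ₀ δ1 with hδ₀def
  -- the finite support list for A₀
  obtain ⟨-, ⟨n, ind, hind⟩⟩ := hLF A₀ hA₀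
  haveI : ∀ i : Fin n, FiniteDimensional K (ind i ⟶ A₀) := fun i => homFin _ _
  -- the subspaces and the dimension function
  let V : ∀ (t : SPrimeTerm ξ X), (t.A ⟶ A₀) → ∀ i : Fin n, Submodule K (ind i ⟶ A₀) :=
    fun t u i => LinearMap.range (postcompLinear K u (M := ind i))
  let dfun : ∀ t : SPrimeTerm ξ X, (t.A ⟶ A₀) → ℕ :=
    fun t u => ∑ i, Module.finrank K ↥(V t u i)
  -- choose a minimizer
  let S : Set ℕ :=
    {k | ∃ (t : SPrimeTerm ξ X) (u : t.A ⟶ A₀), ξ.pull X u δ₀ = t.δ ∧ dfun t u = k}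
  have hS : S.Nonempty := ⟨dfun s₀ (𝟙 A₀), s₀, 𝟙 A₀, by rw [ξ.pull_id], rfl⟩
  obtain ⟨m, um, hum, hdm⟩ := Nat.sInf_mem hS
  have hmin : ∀ (t : SPrimeTerm ξ X) (u : t.A ⟶ A₀), ξ.pull X u δ₀ = t.δ →
      dfun m um ≤ dfun t u := by
    intro t u hu; rw [hdm]; exact Nat.sInf_le ⟨t, u, hu, rfl⟩
  -- the pullback property of the minimizer
  have P : ∀ (w : SPrimeTerm ξ X) (g : w.A ⟶ m.A), ξ.pull X g m.δ = w.δ →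
      ∃ h : m.A ⟶ w.A, ξ.pull X h w.δ = m.δ := by
    intro w g hg
    have huw : ξ.pull X (g ≫ um) δ₀ = w.δ := by rw [ξ.pull_comp, hum, hg]
    have hle : ∀ i, V w (g ≫ um) i ≤ V m um i := by
      intro i x hx
      obtain ⟨g', rfl⟩ := hx
      exact ⟨g' ≫ g, by simp [postcompLinear]⟩
    have hVeq : ∀ i, V w (g ≫ um) i = V m um i := by
      have hrle : ∀ i, Module.finrank K ↥(V w (g ≫ um) i) ≤ Module.finrank K ↥(V m um i) :=
        fun i => Submodule.finrank_mono (hle i)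
      have hsum : dfun m um ≤ dfun w (g ≫ um) := hmin w (g ≫ um) huw
      have hall : ∀ i, Module.finrank K ↥(V m um i) ≤ Module.finrank K ↥(V w (g ≫ um) i) := by
        by_contra hco; push_neg at hco
        obtain ⟨i0, hi0⟩ := hco
        have : dfun w (g ≫ um) < dfun m um :=
          Finset.sum_lt_sum (fun i _ => hrle i) ⟨i0, Finset.mem_univ _, hi0⟩
        omega
      intro i
      exact Submodule.eq_of_le_of_finrank_le (hle i) (hall i)
    have hum0 : um ≠ 0 := by
      intro h0; rw [h0, ξ.pull_zero_mor] at hum; exact m.nonsplit hum.symm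
    obtain ⟨i0, ⟨eiso⟩⟩ := hind m.A m.indec ⟨um, hum0⟩
    have hmem : eiso.inv ≫ um ∈ V m um i0 := ⟨eiso.inv, rfl⟩
    rw [← hVeq i0] at hmem
    obtain ⟨G, hG⟩ := hmem
    have hG' : G ≫ (g ≫ um) = eiso.inv ≫ um := hG
    refine ⟨eiso.hom ≫ G, ?_⟩
    have hcomp : (eiso.hom ≫ G) ≫ (g ≫ um) = um := by
      rw [Category.assoc, hG', ← Category.assoc, eiso.hom_inv_id, Category.id_comp]
    rw [← huw, ← ξ.pull_comp, hcomp, hum]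
  -- the endomorphism ring of m.A is local, and non-units kill m.δ
  haveI hAloc : IsLocalRing (CategoryTheory.End m.A) := isLocalRing_end_of_indec hKS m.indec
  have R1 : ∀ r : m.A ⟶ m.A, (¬ ∃ b, r ≫ b = 𝟙 m.A ∧ b ≫ r = 𝟙 m.A) →
      ξ.pull X r m.δ = 0 := by
    intro r hr
    by_contra hne
    obtain ⟨Bw, xw, yw, hrw⟩ := ξ.real_exists (ξ.pull X r m.δ)
    obtain ⟨h, hh⟩ := P ⟨m.A, Bw, xw, yw, ξ.pull X r m.δ, hrw, hne, m.indec⟩ r rfl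
    rw [← ξ.pull_comp] at hh
    rcases hom_unit_or (h ≫ r) with hu | hu
    · exact hr (hom_inv_snd_of_comp hu)
    · obtain ⟨b, hb1, hb2⟩ := hu
      have hz : ξ.pull X (𝟙 m.A - h ≫ r) m.δ = 0 := by
        rw [ξ.pull_sub, ξ.pull_id, hh, sub_self]
      have hδ0 : m.δ = 0 := by
        have h5 : m.δ = ξ.pull X (b ≫ (𝟙 m.A - h ≫ r)) m.δ := by rw [hb2, ξ.pull_id]
        rw [h5, ξ.pull_comp, hz, ξ.pull_zero_elt]
      exact m.nonsplit hδ0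
  -- morphisms into m.A that do not kill m.δ are retractions
  have L : ∀ (V' : C) (f : V' ⟶ m.A), ξ.pull X f m.δ ≠ 0 → ∃ p : m.A ⟶ V', p ≫ f = 𝟙 m.A := by
    intro V' f hf
    obtain ⟨W, φ, hW, hWne⟩ := exists_indec_pull ξ hKS (ξ.pull X f m.δ) hf
    rw [← ξ.pull_comp] at hWne
    obtain ⟨Bw, xw, yw, hrw⟩ := ξ.real_exists (ξ.pull X (φ ≫ f) m.δ)
    obtain ⟨h, hh⟩ := P ⟨W, Bw, xw, yw, ξ.pull X (φ ≫ f) m.δ, hrw, hWne, hW⟩ (φ ≫ f) rfl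
    rw [← ξ.pull_comp] at hh
    have hu : ∃ b, (h ≫ φ ≫ f) ≫ b = 𝟙 m.A ∧ b ≫ (h ≫ φ ≫ f) = 𝟙 m.A := by
      by_contra hnu
      rw [R1 _ hnu] at hh
      exact m.nonsplit hh.symm
    obtain ⟨b, hb1, hb2⟩ := hu
    refine ⟨b ≫ h ≫ φ, ?_⟩
    calc (b ≫ h ≫ φ) ≫ f = b ≫ (h ≫ φ ≫ f) := by simp only [Category.assoc]
    _ = 𝟙 m.A := hb2
  -- the minimizer works
  refine ⟨m, fun t => ?_⟩
  show ∃ f : m.A ⟶ t.A, ξ.pull X f t.δ = m.δ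
  by_cases hε : ξ.push m.A t.f m.δ = 0
  · exact ξ.pull_reach t.isReal m.δ hε
  · obtain ⟨E, aε, pε, hrε⟩ := ξ.real_exists (ξ.push m.A t.f m.δ)
    obtain ⟨M, hM1, hM2⟩ := ξ.real_lift t.f (𝟙 m.A) m.isReal hrε (by
      show ξ.push m.A t.f m.δ = ξ.pull t.B (𝟙 m.A) (ξ.push m.A t.f m.δ)
      rw [ξ.pull_id])
    have hpε : ξ.pull X pε m.δ = 0 := by
      by_contra hne
      obtain ⟨p, hp⟩ := L E pε hne
      exact hε (ξ.delta_zero_of_retraction hrε hp)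
    obtain ⟨k, hk⟩ := ξ.lift_defl m.isReal pε hpε
    have hphi : (𝟙 m.B - M ≫ k) ≫ m.g = 0 := by
      rw [Preadditive.sub_comp, Category.id_comp, Category.assoc, hk, hM2, Category.comp_id,
        sub_self]
    obtain ⟨wmap, hwmap⟩ := ξ.weak_ker m.isReal _ hphi
    have hstep : (m.f ≫ wmap) ≫ m.f = m.f - t.f ≫ (aε ≫ k) := by
      rw [Category.assoc, hwmap, Preadditive.comp_sub, Category.comp_id, ← Category.assoc, hM1,
        Category.assoc]
    have hζu : ∃ b, (𝟙 X - m.f ≫ wmap) ≫ b = 𝟙 X ∧ b ≫ (𝟙 X - m.f ≫ wmap) = 𝟙 X := by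
      rcases hom_unit_or (m.f ≫ wmap) with hu | hu
      · obtain ⟨b, hb1, hb2⟩ := hu
        have hr : m.f ≫ (wmap ≫ b) = 𝟙 X := by rw [← Category.assoc]; exact hb1
        exact absurd (ξ.delta_zero_of_section m.isReal hr) m.nonsplit
      · exact hu
    obtain ⟨zi, hz1, hz2⟩ := hζu
    have hζδ : ξ.push m.A (𝟙 X - m.f ≫ wmap) m.δ = m.δ := by
      rw [ξ.push_sub, ξ.push_id, ξ.push_comp, ξ.push_infl m.isReal, ξ.push_zero_elt, sub_zero]
    have hζiδ : ξ.push m.A zi m.δ = m.δ := by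
      conv_lhs => rw [← hζδ]
      rw [← ξ.push_comp, hz1, ξ.push_id]
    have hδt' : ξ.push t.A (𝟙 X - m.f ≫ wmap) t.δ ≠ 0 := by
      intro h0
      have h1 : ξ.push t.A zi (ξ.push t.A (𝟙 X - m.f ≫ wmap) t.δ) = t.δ := by
        rw [← ξ.push_comp, hz1, ξ.push_id]
      rw [h0, ξ.push_zero_elt] at h1
      exact t.nonsplit h1.symm
    have hcompζ : (𝟙 X - m.f ≫ wmap) ≫ m.f = t.f ≫ (aε ≫ k) := by
      rw [Preadditive.sub_comp, Category.id_comp, hstep]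
      abel
    have hpush0 : ξ.push t.A m.f (ξ.push t.A (𝟙 X - m.f ≫ wmap) t.δ) = 0 := by
      rw [← ξ.push_comp, hcompζ, ξ.push_comp, ξ.push_infl t.isReal, ξ.push_zero_elt]
    obtain ⟨f₀, hf₀⟩ := ξ.pull_reach m.isReal (ξ.push t.A (𝟙 X - m.f ≫ wmap) t.δ) hpush0
    obtain ⟨Bw, xw, yw, hrw⟩ := ξ.real_exists (ξ.push t.A (𝟙 X - m.f ≫ wmap) t.δ)
    obtain ⟨h₀, hh₀⟩ :=
      P ⟨t.A, Bw, xw, yw, ξ.push t.A (𝟙 X - m.f ≫ wmap) t.δ, hrw, hδt', t.indec⟩ f₀ hf₀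
    refine ⟨h₀, ?_⟩
    have hc : ξ.push m.A (𝟙 X - m.f ≫ wmap) (ξ.pull X h₀ t.δ) = m.δ := by
      rw [← ξ.pull_push]; exact hh₀
    calc ξ.pull X h₀ t.δ
        = ξ.push m.A ((𝟙 X - m.f ≫ wmap) ≫ zi) (ξ.pull X h₀ t.δ) := by
          rw [hz1, ξ.push_id]
      _ = ξ.push m.A zi (ξ.push m.A (𝟙 X - m.f ≫ wmap) (ξ.pull X h₀ t.δ)) := by
          rw [ξ.push_comp]
      _ = ξ.push m.A zi m.δ := by rw [hc]
      _ = m.δ := hζiδ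

end MainDual
theorem stmt2 (K : Type w) [Field K] (C : Type u) [Category.{v} C] [Preadditive C]
    [Linear K C] [HasFiniteBiproducts C] (hKS : IsKrullSchmidt C) (ξ : ExtCat K C)
    (homFin : ∀ X Y : C, FiniteDimensional K (X ⟶ Y))
    (extFin : ∀ X Y : C, FiniteDimensional K (ξ.Ext X Y))
    (hLF : LocFinite C) (X : C) (hX : Indec X) :
    (¬ ξ.ProjObj X → ∃ s : STerm ξ X, ∀ t : STerm ξ X, t.Gt s) ∧
    (¬ ξ.InjObj X → ∃ s : SPrimeTerm ξ X, ∀ t : SPrimeTerm ξ X, t.Gt s) := by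
  constructor
  · intro hP
    exact exists_min_sterm hKS ξ homFin hLF X hX hP
  · intro hI
    exact exists_min_sprime hKS ξ homFin hLF X hX hI
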